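/- arXiv:2508.03390 — 3 statements merged into one kernel-verified Lean document; each statement's English description precedes it below -/
import Mathlib

section
/- For every odd integer n ≥ 3, the matrix A_n is invertible and the matrix A_n⁻¹ B_n is skew-symmetric, i.e. (A_n⁻¹B_n)ᵀ = −A_n⁻¹B_n. -/
open Matrix

/-- The n×n circulant matrix with 1 on the diagonal and 1/2 on the (mod n)
super- and sub-diagonals. -/
noncomputable def matA (n : ℕ) [NeZero n] : Matrix (Fin n) (Fin n) ℝ :=
  fun i j => if j = i then 1 else if j = i + 1 ∨ j = i - 1 then (1 : ℝ)/2 else 0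

/-- The n×n circulant central-difference matrix with 1 on the (mod n)
super-diagonal and -1 on the (mod n) sub-diagonal. -/
def matB (n : ℕ) [NeZero n] : Matrix (Fin n) (Fin n) ℝ :=
  fun i j => if j = i + 1 then 1 else if j = i - 1 then -1 else 0

open scoped Fin.NatCast Fin.CommRing

/-- The cyclic shift matrix. -/
def shiftM (n : ℕ) [NeZero n] : Matrix (Fin n) (Fin n) ℝ :=
  fun i j => if j = i + 1 then 1 else 0

lemma shiftM_pow (n : ℕ) [NeZero n] (k : ℕ) :
    (shiftM n) ^ k = Matrix.of fun i j => if j = i + (k : Fin n) then (1 : ℝ) else 0 := by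
  induction k with
  | zero =>
    funext i j
    simp [Matrix.one_apply, eq_comm]
  | succ k ih =>
    rw [pow_succ, ih]
    funext i j
    simp only [Matrix.mul_apply, Matrix.of_apply, shiftM, ite_mul, one_mul, zero_mul]
    rw [Finset.sum_ite_eq' Finset.univ (i + (k : Fin n)) (fun m => if j = m + 1 then (1:ℝ) else 0)]
    simp [add_assoc]

lemma shiftM_pow_n (n : ℕ) [NeZero n] : (shiftM n) ^ n = 1 := by
  rw [shiftM_pow]
  funext i j
  simp [Matrix.one_apply, Fin.natCast_self, eq_comm]

lemma natCast_sub_one (n : ℕ) [NeZero n] : ((n - 1 : ℕ) : Fin n) = -1 := by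
  have h1 : 1 ≤ n := Nat.one_le_iff_ne_zero.mpr (NeZero.ne n)
  have h : ((n - 1 : ℕ) : Fin n) + 1 = ((n : ℕ) : Fin n) := by
    rw [← Nat.cast_add_one, Nat.sub_add_cancel h1]
  rw [Fin.natCast_self] at h
  linear_combination h

lemma one_ne_zero_fin (n : ℕ) [NeZero n] (hn : 3 ≤ n) : (1 : Fin n) ≠ 0 := by
  have h : (1 : Fin n).val = 1 := by
    rw [Fin.val_one']
    exact Nat.mod_eq_of_lt (by omega)
  intro h0
  rw [h0] at h
  simp at h

lemma two_ne_zero_fin (n : ℕ) [NeZero n] (hn : 3 ≤ n) : (2 : Fin n) ≠ 0 := by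
  intro h
  have h1 : ((2 : ℕ) : Fin n) = 0 := by exact_mod_cast h
  have h2 := congrArg Fin.val h1
  rw [Fin.val_cast_of_lt (by omega)] at h2
  simp at h2

lemma ne_add_one (n : ℕ) [NeZero n] (hn : 3 ≤ n) (i : Fin n) : i ≠ i + 1 := fun h =>
  one_ne_zero_fin n hn (by linear_combination -h)

lemma ne_sub_one (n : ℕ) [NeZero n] (hn : 3 ≤ n) (i : Fin n) : i ≠ i - 1 := fun h =>
  one_ne_zero_fin n hn (by linear_combination h)

lemma add_one_ne_sub_one (n : ℕ) [NeZero n] (hn : 3 ≤ n) (i : Fin n) : i + 1 ≠ i - 1 := fun h =>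
  two_ne_zero_fin n hn (by linear_combination h)

lemma matA_eq (n : ℕ) [NeZero n] (hn : 3 ≤ n) :
    matA n = ((1:ℝ)/2) • ((shiftM n) ^ (n-1) + 1 + (1 + shiftM n)) := by
  funext i j
  simp only [matA, Matrix.smul_apply, Matrix.add_apply, Matrix.one_apply, shiftM_pow, Matrix.of_apply, shiftM,
    natCast_sub_one, ← sub_eq_add_neg, smul_eq_mul]
  by_cases h0 : j = i
  · subst h0
    simp only [if_pos rfl, if_neg (ne_sub_one n hn j), if_neg (ne_add_one n hn j)]
    norm_num
  · by_cases h1 : j = i + 1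
    · subst h1
      simp only [if_neg h0, if_pos (Or.inl rfl), if_pos rfl, if_neg (ne_add_one n hn i),
        if_neg (add_one_ne_sub_one n hn i)]
      norm_num
    · by_cases h2 : j = i - 1
      · subst h2
        simp only [if_neg h0, if_pos (Or.inr rfl), if_pos rfl, if_neg (ne_sub_one n hn i),
          if_neg h1]
        norm_num
      · simp only [if_neg h0, if_neg (fun h : i = j => h0 h.symm), if_neg h1, if_neg h2,
          if_neg (fun h : j = i + 1 ∨ j = i - 1 => h.elim h1 h2)]
        norm_num

lemma matB_eq (n : ℕ) [NeZero n] (hn : 3 ≤ n) :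
    matB n = shiftM n - (shiftM n) ^ (n-1) := by
  funext i j
  simp only [matB, Matrix.sub_apply, shiftM_pow, Matrix.of_apply, shiftM, natCast_sub_one, ← sub_eq_add_neg]
  by_cases h1 : j = i + 1
  · subst h1
    simp only [if_pos rfl, if_neg (add_one_ne_sub_one n hn i)]
    norm_num
  · by_cases h2 : j = i - 1
    · subst h2
      simp only [if_neg h1, if_pos rfl]
      norm_num
    · simp only [if_neg h1, if_neg h2]
      norm_num

lemma cond_iff_1 (n : ℕ) [NeZero n] (i j : Fin n) : (i = j - 1) ↔ (j = i + 1) := by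
  constructor <;> intro h <;> linear_combination -h

lemma shiftM_transpose (n : ℕ) [NeZero n] : (shiftM n)ᵀ = (shiftM n) ^ (n-1) := by
  funext i j
  simp only [Matrix.transpose_apply, shiftM_pow, Matrix.of_apply, shiftM, natCast_sub_one, ← sub_eq_add_neg]
  congr 1
  rw [eq_iff_iff]
  exact (cond_iff_1 n j i).symm

lemma shiftM_pow_transpose (n : ℕ) [NeZero n] : ((shiftM n) ^ (n-1))ᵀ = shiftM n := by
  funext i j
  simp only [Matrix.transpose_apply, shiftM_pow, Matrix.of_apply, shiftM, natCast_sub_one, ← sub_eq_add_neg]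
  congr 1
  rw [eq_iff_iff]
  exact cond_iff_1 n i j

theorem matA_inv_matB_skew (n : ℕ) [NeZero n] (hn : 3 ≤ n) (hodd : Odd n) :
    IsUnit (matA n) ∧ ((matA n)⁻¹ * matB n)ᵀ = -((matA n)⁻¹ * matB n) := by
  set s := shiftM n with hs
  have hsn : s ^ n = 1 := shiftM_pow_n n
  have hn1 : n - 1 + 1 = n := Nat.sub_add_cancel (by omega)
  have hpow1 : s ^ (n-1) * s = 1 := by rw [← pow_succ, hn1, hsn]
  have hpow1' : s * s ^ (n-1) = 1 := by rw [← pow_succ', hn1, hsn]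
  -- geometric sum inverse of (1 + s)
  set M : Matrix (Fin n) (Fin n) ℝ := ∑ i ∈ Finset.range n, (-s) ^ i with hM
  have hMneg : (-s) ^ n = -1 := by rw [hodd.neg_pow, hsn]
  have hge1 : M * (1 + s) = 1 + 1 := by
    have h := geom_sum_mul (-s) n
    rw [hMneg] at h
    have h2 : M * (-(1 + s)) = -(1 + 1) := by
      calc M * (-(1 + s)) = M * (-s - 1) := by rw [show -(1 + s) = -s - 1 from by abel]
        _ = -1 - 1 := h
        _ = -(1+1) := by abel
    have h3 := congrArg Neg.neg h2
    rwa [mul_neg, neg_neg, neg_neg] at h3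
  have hge2 : (1 + s) * M = 1 + 1 := by
    have h := mul_geom_sum (-s) n
    rw [hMneg] at h
    have h2 : (-(1 + s)) * M = -(1 + 1) := by
      calc (-(1 + s)) * M = (-s - 1) * M := by rw [show -(1 + s) = -s - 1 from by abel]
        _ = -1 - 1 := h
        _ = -(1+1) := by abel
    have h3 := congrArg Neg.neg h2
    rwa [neg_mul, neg_neg, neg_neg] at h3
  have hhalf : ∀ X : Matrix (Fin n) (Fin n) ℝ, X = 1 + 1 → ((1:ℝ)/2) • X = 1 := by
    intro X hX
    rw [hX, smul_add, ← add_smul]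
    norm_num
  have h1s : IsUnit (1 + s) := by
    refine isUnit_iff_exists.mpr ⟨((1:ℝ)/2) • M, ?_, ?_⟩
    · rw [mul_smul_comm]; exact hhalf _ hge2
    · rw [smul_mul_assoc]; exact hhalf _ hge1
  have hsu : IsUnit s := isUnit_iff_exists.mpr ⟨s ^ (n-1), hpow1', hpow1⟩
  have hu1 : IsUnit (((1:ℝ)/2) • (1 : Matrix (Fin n) (Fin n) ℝ)) := by
    refine isUnit_iff_exists.mpr ⟨(2:ℝ) • 1, ?_, ?_⟩ <;>
      · rw [smul_mul_smul_comm, one_mul]; norm_num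
  have hexpand : s ^ (n-1) * ((1 + s) * (1 + s)) = s ^ (n-1) + 1 + (1 + s) := by
    have e1 : (1 + s) * (1 + s) = 1 + s + (s + s * s) := by noncomm_ring
    rw [e1, mul_add, mul_add, mul_add, mul_one, ← mul_assoc, hpow1, one_mul]
  have hAfact : matA n = (((1:ℝ)/2) • (1 : Matrix (Fin n) (Fin n) ℝ)) *
      (s ^ (n-1) * ((1 + s) * (1 + s))) := by
    rw [smul_mul_assoc, one_mul, hexpand, matA_eq n hn]
  have hAunit : IsUnit (matA n) := by
    rw [hAfact]
    exact hu1.mul ((hsu.pow _).mul (h1s.mul h1s))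
  -- commutation
  have hcs : Commute s (s ^ (n-1)) := (Commute.refl s).pow_right _
  have key : matA n * matB n = matB n * matA n := by
    rw [matA_eq n hn, matB_eq n hn]
    have h : Commute (s ^ (n-1) + 1 + (1 + s)) (s - s ^ (n-1)) := by
      have c1 : Commute (s ^ (n-1)) (s - s ^ (n-1)) :=
        (hcs.symm).sub_right (Commute.refl _)
      have c2 : Commute (1 : Matrix (Fin n) (Fin n) ℝ) (s - s ^ (n-1)) := Commute.one_left _
      have c3 : Commute s (s - s ^ (n-1)) := (Commute.refl s).sub_right hcs
      exact ((c1.add_left c2).add_left (c2.add_left c3))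
    exact (h.smul_left ((1:ℝ)/2)).eq
  have hdet : IsUnit (matA n).det := (Matrix.isUnit_iff_isUnit_det _).mp hAunit
  have hA1 : matA n * (matA n)⁻¹ = 1 := Matrix.mul_nonsing_inv _ hdet
  have hA2 : (matA n)⁻¹ * matA n = 1 := Matrix.nonsing_inv_mul _ hdet
  have hinv : matB n * (matA n)⁻¹ = (matA n)⁻¹ * matB n := by
    have h1 : (matA n)⁻¹ * (matA n * matB n) * (matA n)⁻¹ = matB n * (matA n)⁻¹ := by
      rw [← mul_assoc, hA2, one_mul]
    have h2 : (matA n)⁻¹ * (matB n * matA n) * (matA n)⁻¹ = (matA n)⁻¹ * matB n := by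
      rw [mul_assoc, mul_assoc, hA1, mul_one]
    rw [← h1, key, h2]
  -- transpose facts
  have hAsymm : (matA n)ᵀ = matA n := by
    rw [matA_eq n hn, Matrix.transpose_smul, Matrix.transpose_add, Matrix.transpose_add,
      Matrix.transpose_add, Matrix.transpose_one, shiftM_transpose n, shiftM_pow_transpose n]
    congr 1
    abel
  have hBskew : (matB n)ᵀ = -(matB n) := by
    rw [matB_eq n hn, Matrix.transpose_sub, shiftM_transpose n, shiftM_pow_transpose n]
    abel
  refine ⟨hAunit, ?_⟩
  rw [Matrix.transpose_mul, Matrix.transpose_nonsing_inv, hAsymm, hBskew, neg_mul, hinv]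
end

section
/- Let n ≥ 3 be an odd integer, let ε, μ > 0 and c ∈ ℝ, and let e, e', h, h' ∈ ℝⁿ be such that the stacked vector (ε(e' − e), μ(h' − h)) ∈ ℝ^{2n} equals c · 𝒜_n⁻¹ℬ_n applied to the stacked vector ((e' + e)/2, (h' + h)/2). Then ε‖e'‖² + μ‖h'‖² = ε‖e‖² + μ‖h‖², where ‖·‖ is the Euclidean norm on ℝⁿ. -/
open Matrix

/-- The 2n×2n block-diagonal matrix diag(A, A). -/
noncomputable def calA (n : ℕ) [NeZero n] : Matrix (Fin n ⊕ Fin n) (Fin n ⊕ Fin n) ℝ :=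
  Matrix.fromBlocks (matA n) 0 0 (matA n)

/-- The 2n×2n block matrix [[0, B],[B, 0]]. -/
def calB (n : ℕ) [NeZero n] : Matrix (Fin n ⊕ Fin n) (Fin n ⊕ Fin n) ℝ :=
  Matrix.fromBlocks 0 (matB n) (matB n) 0

lemma matA_eq_circ (n : ℕ) [NeZero n] :
    matA n = Matrix.circulant (fun k : Fin n => if k = 0 then 1 else
      if k = -1 ∨ k = 1 then (1 : ℝ)/2 else 0) := by
  ext i j
  have e0 : (j = i) ↔ (i - j = 0) := by rw [sub_eq_zero, eq_comm]
  have e1 : (j = i + 1) ↔ (i - j = -1) := by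
    rw [sub_eq_iff_eq_add', ← sub_eq_add_neg, eq_comm (a := i), sub_eq_iff_eq_add]
  have e2 : (j = i - 1) ↔ (i - j = 1) := by
    rw [sub_eq_iff_eq_add', eq_comm (a := i), eq_sub_iff_add_eq, add_comm]
  simp only [matA, Matrix.circulant_apply, e0, e1, e2]

lemma matB_eq_circ (n : ℕ) [NeZero n] :
    matB n = Matrix.circulant (fun k : Fin n => if k = -1 then 1 else
      if k = 1 then (-1 : ℝ) else 0) := by
  ext i j
  have e1 : (j = i + 1) ↔ (i - j = -1) := by
    rw [sub_eq_iff_eq_add', ← sub_eq_add_neg, eq_comm (a := i), sub_eq_iff_eq_add]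
  have e2 : (j = i - 1) ↔ (i - j = 1) := by
    rw [sub_eq_iff_eq_add', eq_comm (a := i), eq_sub_iff_add_eq, add_comm]
  simp only [matB, Matrix.circulant_apply, e1, e2]

lemma matAB_comm (n : ℕ) [NeZero n] : matA n * matB n = matB n * matA n := by
  rw [matA_eq_circ, matB_eq_circ, Matrix.circulant_mul_comm]

lemma matA_symm (n : ℕ) [NeZero n] : (matA n)ᵀ = matA n := by
  rw [matA_eq_circ, Matrix.transpose_circulant, Matrix.circulant_inj]
  funext k
  simp only [neg_eq_iff_eq_neg, neg_zero, neg_neg]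
  split_ifs <;> tauto

open Fin.NatCast in
lemma one_ne_negone (n : ℕ) [NeZero n] (hn : 3 ≤ n) : (1 : Fin n) ≠ -1 := by
  intro h
  rw [eq_neg_iff_add_eq_zero] at h
  have h2 : ((2 : ℕ) : Fin n) = 0 := by rw [Nat.cast_two, ← one_add_one_eq_two]; exact h
  rw [Fin.natCast_eq_zero] at h2
  have := Nat.le_of_dvd (by norm_num) h2
  omega

lemma matB_antisymm (n : ℕ) [NeZero n] (hn : 3 ≤ n) : (matB n)ᵀ = -(matB n) := by
  have h1 := one_ne_negone n hn
  rw [matB_eq_circ, Matrix.transpose_circulant]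
  ext i j
  simp only [Matrix.circulant_apply, Matrix.neg_apply, neg_eq_iff_eq_neg, neg_neg]
  split_ifs <;> simp_all

lemma calA_symm (n : ℕ) [NeZero n] : (calA n)ᵀ = calA n := by
  simp [calA, Matrix.fromBlocks_transpose, matA_symm]

lemma calB_antisymm (n : ℕ) [NeZero n] (hn : 3 ≤ n) : (calB n)ᵀ = -(calB n) := by
  simp [calB, Matrix.fromBlocks_transpose, matB_antisymm n hn, Matrix.fromBlocks_neg]

lemma calAB_comm (n : ℕ) [NeZero n] : calA n * calB n = calB n * calA n := by
  simp [calA, calB, Matrix.fromBlocks_multiply, matAB_comm]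

lemma calAinvB_comm (n : ℕ) [NeZero n] : (calA n)⁻¹ * calB n = calB n * (calA n)⁻¹ := by
  by_cases hu : IsUnit (calA n).det
  · have h := calAB_comm n
    calc (calA n)⁻¹ * calB n
        = (calA n)⁻¹ * (calB n * calA n) * (calA n)⁻¹ := by
          rw [Matrix.mul_assoc, Matrix.mul_assoc, Matrix.mul_nonsing_inv _ hu, Matrix.mul_one]
      _ = (calA n)⁻¹ * (calA n * calB n) * (calA n)⁻¹ := by rw [h]
      _ = calB n * (calA n)⁻¹ := by
          rw [← Matrix.mul_assoc, Matrix.nonsing_inv_mul _ hu, Matrix.one_mul]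
  · rw [Matrix.nonsing_inv_apply_not_isUnit _ hu, Matrix.zero_mul, Matrix.mul_zero]

lemma M_skew (n : ℕ) [NeZero n] (hn : 3 ≤ n) :
    ((calA n)⁻¹ * calB n)ᵀ = -((calA n)⁻¹ * calB n) := by
  rw [Matrix.transpose_mul, Matrix.transpose_nonsing_inv, calA_symm, calB_antisymm n hn,
    Matrix.neg_mul, calAinvB_comm]

lemma M_mulVec_dot (n : ℕ) [NeZero n] (hn : 3 ≤ n)
    (w : Fin n ⊕ Fin n → ℝ) :
    (((calA n)⁻¹ * calB n) *ᵥ w) ⬝ᵥ w = 0 := by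
  set M := (calA n)⁻¹ * calB n with hM
  have h : (M *ᵥ w) ⬝ᵥ w = -((M *ᵥ w) ⬝ᵥ w) := by
    calc (M *ᵥ w) ⬝ᵥ w = w ⬝ᵥ (M *ᵥ w) := dotProduct_comm _ _
      _ = (w ᵥ* M) ⬝ᵥ w := by rw [Matrix.dotProduct_mulVec]
      _ = (Mᵀ *ᵥ w) ⬝ᵥ w := by rw [Matrix.mulVec_transpose]
      _ = ((-M) *ᵥ w) ⬝ᵥ w := by rw [M_skew n hn]
      _ = -((M *ᵥ w) ⬝ᵥ w) := by rw [Matrix.neg_mulVec, neg_dotProduct]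
  linarith

lemma euclid_norm_sq (n : ℕ) (x : EuclideanSpace ℝ (Fin n)) :
    ‖x‖^2 = ∑ i, x i ^ 2 := by
  rw [EuclideanSpace.norm_eq, Real.sq_sqrt (Finset.sum_nonneg fun i _ => sq_nonneg _)]
  simp [Real.norm_eq_abs, sq_abs]

theorem midpoint_stage_energy (n : ℕ) [NeZero n] (hn : 3 ≤ n) (hodd : Odd n)
    (ε μ c : ℝ) (hε : 0 < ε) (hμ : 0 < μ)
    (e e' h h' : EuclideanSpace ℝ (Fin n))
    (hstage : Sum.elim (fun i => ε * (e' i - e i)) (fun i => μ * (h' i - h i)) =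
      c • (((calA n)⁻¹ * calB n) *ᵥ
        Sum.elim (fun i => (e' i + e i) / 2) (fun i => (h' i + h i) / 2))) :
    ε * ‖e'‖^2 + μ * ‖h'‖^2 = ε * ‖e‖^2 + μ * ‖h‖^2 := by
  set w : Fin n ⊕ Fin n → ℝ :=
    Sum.elim (fun i => (e' i + e i) / 2) (fun i => (h' i + h i) / 2) with hw
  have hvw : (Sum.elim (fun i => ε * (e' i - e i)) (fun i => μ * (h' i - h i))) ⬝ᵥ w = 0 := by
    rw [hstage, smul_dotProduct, M_mulVec_dot n hn w, smul_zero]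
  have key : (∑ i, ε * (e' i - e i) * ((e' i + e i) / 2))
      + (∑ i, μ * (h' i - h i) * ((h' i + h i) / 2)) = 0 := by
    rw [← hvw]
    simp [dotProduct, Fintype.sum_sum_type, hw]
  have he : ∑ i, ε * (e' i - e i) * ((e' i + e i) / 2)
      = ε/2 * ((∑ i, e' i ^ 2) - ∑ i, e i ^ 2) := by
    rw [← Finset.sum_sub_distrib, Finset.mul_sum]
    exact Finset.sum_congr rfl fun i _ => by ring
  have hh : ∑ i, μ * (h' i - h i) * ((h' i + h i) / 2)
      = μ/2 * ((∑ i, h' i ^ 2) - ∑ i, h i ^ 2) := by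
    rw [← Finset.sum_sub_distrib, Finset.mul_sum]
    exact Finset.sum_congr rfl fun i _ => by ring
  rw [euclid_norm_sq, euclid_norm_sq, euclid_norm_sq, euclid_norm_sq]
  rw [he, hh] at key
  linarith
end

section
/- (Discrete energy conservation of Splitting method I.) Let I, J, K ≥ 3 be odd integers, ε, μ, τ, h_x, h_y, h_z > 0 and λ ∈ ℝ. Let E_m⁰, H_m⁰, E_m^{[1]}, H_m^{[1]}, E_m^{[2]}, H_m^{[2]}, E_m¹, H_m¹ : Fin I × Fin J × Fin K → ℝ (m = 1,2,3) be grid fields and θ : Fin I × Fin J × Fin K → ℝ. Assume: (Stage 1) for every (j,k), the stacked x-slice vector (ε(E₃^{[1]} − E₃⁰)_{·,j,k}, μ(H₂^{[1]} − H₂⁰)_{·,j,k}) ∈ ℝ^{2I} equals (τ/h_x)·𝒜_I⁻¹ℬ_I applied to ((E₃^{[1]} + E₃⁰)/2, (H₂^{[1]} + H₂⁰)/2)_{·,j,k}; for every (i,k), the stacked y-slice vector for the pair (E₁, H₃) satisfies the same relation with factor τ/h_y and matrices 𝒜_J⁻¹ℬ_J; and for every (i,j), the stacked z-slice vector for the pair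 (E₂, H₁) satisfies the same relation with factor τ/h_z and matrices 𝒜_K⁻¹ℬ_K. (Stage 2) the analogous relations hold from (E^{[1]},H^{[1]}) to (E^{[2]},H^{[2]}) for the pair (E₂,H₃) in the x-direction with factor −τ/h_x, for (E₃,H₁) in the y-direction with factor −τ/h_y, and for (E₁,H₂) in the z-direction with factor −τ/h_z. (Stage 3) at every grid point (i,j,k), with c = cos(λθ(i,j,k)/√(εμ)) and s = sin(λθ(i,j,k)/√(εμ)), one has E_m¹ = c E_m^{[2]} − √(μ/ε) s H_m^{[2]} and H_m¹ = √(ε/μ) s E_m^{[2]} + c H_m^{[2]} for m = 1,2,3. Then the discrete energy is conserved: ℰ(E¹,H¹) = ℰ(E⁰,H⁰). -/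
open Matrix

/-- One implicit-midpoint stage relation along a one-dimensional slice:
the stacked vector (ε(u'−u), μ(v'−v)) equals c · 𝒜⁻¹ℬ applied to the
stacked midpoint vector ((u'+u)/2, (v'+v)/2). -/
noncomputable def stageRel (n : ℕ) [NeZero n] (ε μ c : ℝ)
    (u u' v v' : Fin n → ℝ) : Prop :=
  Sum.elim (fun i => ε * (u' i - u i)) (fun i => μ * (v' i - v i)) =
    c • (((calA n)⁻¹ * calB n) *ᵥ
      Sum.elim (fun i => (u' i + u i) / 2) (fun i => (v' i + v i) / 2))

/-- The discrete electromagnetic energy of grid fields (E₁,E₂,E₃), (H₁,H₂,H₃). -/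
noncomputable def discreteEnergy {I J K : ℕ} (ε μ : ℝ)
    (E1 E2 E3 H1 H2 H3 : Fin I × Fin J × Fin K → ℝ) : ℝ :=
  ε * (∑ p, E1 p ^ 2 + ∑ p, E2 p ^ 2 + ∑ p, E3 p ^ 2) +
    μ * (∑ p, H1 p ^ 2 + ∑ p, H2 p ^ 2 + ∑ p, H3 p ^ 2)


namespace SplitAux

open Fin.CommRing

variable {n : ℕ} [NeZero n]

def P (n : ℕ) [NeZero n] : Matrix (Fin n) (Fin n) ℝ :=
  Matrix.of fun i j => if j = i + 1 then 1 else 0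

lemma sub_one_eq_iff {i j : Fin n} : i = j + 1 ↔ j = i - 1 := by
  constructor <;> intro h <;> subst h <;> ring

lemma P_mul_Pt (n : ℕ) [NeZero n] : P n * (P n)ᵀ = (1 : Matrix (Fin n) (Fin n) ℝ) := by
  ext i j
  simp [Matrix.mul_apply, P, Matrix.transpose_apply, Matrix.one_apply, ite_and]
  exact if_congr eq_comm rfl rfl

lemma Pt_mul_P (n : ℕ) [NeZero n] : (P n)ᵀ * P n = (1 : Matrix (Fin n) (Fin n) ℝ) := by
  ext i j
  simp only [Matrix.mul_apply, P, Matrix.transpose_apply, Matrix.of_apply,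
    Matrix.one_apply, sub_one_eq_iff]
  simp [ite_and, sub_left_inj]
  exact if_congr eq_comm rfl rfl

lemma one_ne_zero' (hn : 3 ≤ n) : (1 : Fin n) ≠ 0 := by
  intro h
  rw [show (1 : Fin n) = ((1 : ℕ) : Fin n) by norm_num, Fin.natCast_eq_zero] at h
  have := Nat.le_of_dvd one_pos h
  omega

lemma two_ne_zero' (hn : 3 ≤ n) : (2 : Fin n) ≠ 0 := by
  intro h
  rw [show (2 : Fin n) = ((2 : ℕ) : Fin n) by norm_num, Fin.natCast_eq_zero] at h
  have := Nat.le_of_dvd two_pos h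
  omega

lemma matA_eq (hn : 3 ≤ n) : matA n = 1 + (2⁻¹ : ℝ) • (P n + (P n)ᵀ) := by
  have h1 := one_ne_zero' hn
  have h2 := two_ne_zero' hn
  ext i j
  simp only [matA, Matrix.add_apply, Matrix.smul_apply, Matrix.one_apply, P,
    Matrix.transpose_apply, Matrix.of_apply, smul_eq_mul, ← sub_one_eq_iff]
  by_cases hji : j = i
  · subst hji
    have e1 : ¬ j = j + 1 := fun h => h1 (by linear_combination -h)
    simp [e1]
  · have hij : ¬ i = j := fun h => hji h.symm
    by_cases ha : j = i + 1
    · subst ha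
      have hb : ¬ i = i + 1 + 1 := fun h => h2 (by linear_combination -h)
      have hn1 : n ≠ 1 := by omega
      simp [hji, hij, hb, hn1]
    · by_cases hb : i = j + 1
      · subst hb
        have hb2 : ¬ j = j + 1 + 1 := fun h => h2 (by linear_combination -h)
        have hn1 : n ≠ 1 := by omega
        simp [hji, hij, ha, hb2, hn1]
      · simp [hji, hij, ha, hb]

lemma matB_eq (hn : 3 ≤ n) : matB n = P n - (P n)ᵀ := by
  have h2 := two_ne_zero' hn
  ext i j
  simp only [matB, Matrix.sub_apply, P, Matrix.transpose_apply, Matrix.of_apply,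
    ← sub_one_eq_iff]
  by_cases ha : j = i + 1
  · subst ha
    have hb : ¬ i = i + 1 + 1 := fun h => h2 (by linear_combination -h)
    simp [hb]
  · by_cases hb : i = j + 1
    · subst hb
      simp [ha]
    · simp [ha, hb]

lemma matA_transpose (hn : 3 ≤ n) : (matA n)ᵀ = matA n := by
  rw [matA_eq hn]
  simp [Matrix.transpose_add, Matrix.transpose_smul]
  abel

lemma matB_transpose (hn : 3 ≤ n) : (matB n)ᵀ = -(matB n) := by
  rw [matB_eq hn]
  simp

lemma matA_mul_matB_comm (hn : 3 ≤ n) : matA n * matB n = matB n * matA n := by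
  rw [matA_eq hn, matB_eq hn]
  simp only [add_mul, mul_add, one_mul, mul_one, sub_mul, mul_sub, smul_mul_assoc,
    Matrix.mul_smul, P_mul_Pt, Pt_mul_P]
  abel

lemma calA_transpose (hn : 3 ≤ n) : (calA n)ᵀ = calA n := by
  unfold calA
  rw [Matrix.fromBlocks_transpose, matA_transpose hn]
  simp

lemma calB_transpose (hn : 3 ≤ n) : (calB n)ᵀ = -(calB n) := by
  unfold calB
  rw [Matrix.fromBlocks_transpose, matB_transpose hn]
  simp [Matrix.fromBlocks_neg]

lemma calA_mul_calB_comm (hn : 3 ≤ n) : calA n * calB n = calB n * calA n := by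
  unfold calA calB
  rw [Matrix.fromBlocks_multiply, Matrix.fromBlocks_multiply]
  simp [matA_mul_matB_comm hn]

lemma N_antisymm (hn : 3 ≤ n) :
    ((calA n)⁻¹ * calB n)ᵀ = -((calA n)⁻¹ * calB n) := by
  by_cases h : IsUnit (calA n).det
  · have hAinv_t : ((calA n)⁻¹)ᵀ = (calA n)⁻¹ := by
      rw [Matrix.transpose_nonsing_inv, calA_transpose hn]
    have h1 : (calA n)⁻¹ * calA n = 1 := Matrix.nonsing_inv_mul _ h
    have h2 : calA n * (calA n)⁻¹ = 1 := Matrix.mul_nonsing_inv _ h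
    have hcomm : (calA n)⁻¹ * calB n = calB n * (calA n)⁻¹ := by
      calc (calA n)⁻¹ * calB n
          = (calA n)⁻¹ * calB n * (calA n * (calA n)⁻¹) := by rw [h2, mul_one]
        _ = (calA n)⁻¹ * (calB n * calA n) * (calA n)⁻¹ := by
            simp only [Matrix.mul_assoc]
        _ = (calA n)⁻¹ * (calA n * calB n) * (calA n)⁻¹ := by
            rw [calA_mul_calB_comm hn]
        _ = ((calA n)⁻¹ * calA n) * calB n * (calA n)⁻¹ := by
            simp only [Matrix.mul_assoc]
        _ = calB n * (calA n)⁻¹ := by rw [h1, one_mul]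
    rw [Matrix.transpose_mul, hAinv_t, calB_transpose hn, Matrix.neg_mul, hcomm]
  · rw [Matrix.nonsing_inv_apply_not_isUnit _ h]
    simp

lemma quad_zero (hn : 3 ≤ n) (x : Fin n ⊕ Fin n → ℝ) :
    x ⬝ᵥ (((calA n)⁻¹ * calB n) *ᵥ x) = 0 := by
  have h1 : x ⬝ᵥ (((calA n)⁻¹ * calB n) *ᵥ x)
      = -(x ⬝ᵥ (((calA n)⁻¹ * calB n) *ᵥ x)) := by
    conv_lhs => rw [Matrix.dotProduct_mulVec, ← Matrix.mulVec_transpose,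
      N_antisymm hn, Matrix.neg_mulVec, neg_dotProduct, dotProduct_comm]
  linarith

lemma stage_energy {n : ℕ} [NeZero n] (hn : 3 ≤ n) (ε μ c : ℝ)
    (u u' v v' : Fin n → ℝ) (h : stageRel n ε μ c u u' v v') :
    ε * ∑ i, u' i ^ 2 + μ * ∑ i, v' i ^ 2 = ε * ∑ i, u i ^ 2 + μ * ∑ i, v i ^ 2 := by
  set m : Fin n ⊕ Fin n → ℝ :=
    Sum.elim (fun i => (u' i + u i) / 2) (fun i => (v' i + v i) / 2) with hm
  have hd : (Sum.elim (fun i => ε * (u' i - u i)) (fun i => μ * (v' i - v i))) ⬝ᵥ m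
      = 0 := by
    rw [h]
    rw [smul_dotProduct]
    rw [dotProduct_comm, quad_zero hn]
    simp
  rw [dotProduct] at hd
  rw [Fintype.sum_sum_type] at hd
  simp only [Sum.elim_inl, Sum.elim_inr, hm] at hd
  have e1 : ∀ i, ε * (u' i - u i) * ((u' i + u i) / 2)
      = ε * (u' i ^ 2) / 2 - ε * (u i ^ 2) / 2 := fun i => by ring
  have e2 : ∀ i, μ * (v' i - v i) * ((v' i + v i) / 2)
      = μ * (v' i ^ 2) / 2 - μ * (v i ^ 2) / 2 := fun i => by ring
  rw [Finset.sum_congr rfl (fun i _ => e1 i), Finset.sum_congr rfl (fun i _ => e2 i)] at hd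
  rw [Finset.sum_sub_distrib, Finset.sum_sub_distrib] at hd
  simp only [← Finset.mul_sum, mul_div_assoc, ← Finset.sum_div] at hd
  linarith

lemma rot_energy {ε μ : ℝ} (hε : 0 < ε) (hμ : 0 < μ) (t E H : ℝ) :
    ε * (Real.cos t * E - Real.sqrt (μ / ε) * Real.sin t * H) ^ 2 +
      μ * (Real.sqrt (ε / μ) * Real.sin t * E + Real.cos t * H) ^ 2 =
    ε * E ^ 2 + μ * H ^ 2 := by
  set c := Real.cos t
  set s := Real.sin t
  set a := Real.sqrt (μ / ε) with ha
  set b := Real.sqrt (ε / μ) with hb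
  have ha2 : ε * a ^ 2 = μ := by
    rw [ha, Real.sq_sqrt (by positivity : (0:ℝ) ≤ μ / ε)]
    field_simp
  have hb2 : μ * b ^ 2 = ε := by
    rw [hb, Real.sq_sqrt (by positivity : (0:ℝ) ≤ ε / μ)]
    field_simp
  have hab : a * b = 1 := by
    rw [ha, hb, ← Real.sqrt_mul (by positivity)]
    rw [show μ / ε * (ε / μ) = 1 by field_simp]
    exact Real.sqrt_one
  have hkey : ε * a = μ * b := by
    have : ε * a = ε * a * (a * b) := by rw [hab, mul_one]
    rw [this]
    linear_combination b * ha2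
  have hcs : c ^ 2 + s ^ 2 = 1 := by
    rw [add_comm]
    exact Real.sin_sq_add_cos_sq t
  linear_combination (s * H) ^ 2 * ha2 + (s * E) ^ 2 * hb2 -
    2 * c * s * E * H * hkey + (ε * E ^ 2 + μ * H ^ 2) * hcs

lemma sum3 {I J K : ℕ} (f : Fin I × Fin J × Fin K → ℝ) :
    ∑ p, f p = ∑ i, ∑ j, ∑ k, f (i, j, k) := by
  rw [Fintype.sum_prod_type]
  exact Finset.sum_congr rfl fun i _ => Fintype.sum_prod_type _

lemma sumx {I J K : ℕ} (f : Fin I × Fin J × Fin K → ℝ) :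
    ∑ p, f p = ∑ j, ∑ k, ∑ i, f (i, j, k) := by
  rw [sum3, Finset.sum_comm]
  exact Finset.sum_congr rfl fun j _ => Finset.sum_comm

lemma sumy {I J K : ℕ} (f : Fin I × Fin J × Fin K → ℝ) :
    ∑ p, f p = ∑ i, ∑ k, ∑ j, f (i, j, k) := by
  rw [sum3]
  exact Finset.sum_congr rfl fun i _ => Finset.sum_comm

end SplitAux


/-- Discrete energy conservation of Splitting method I. -/
theorem splittingI_energy_conservation
    (I J K : ℕ) [NeZero I] [NeZero J] [NeZero K]
    (hI : 3 ≤ I) (hJ : 3 ≤ J) (hK : 3 ≤ K)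
    (hIo : Odd I) (hJo : Odd J) (hKo : Odd K)
    (ε μ τ hx hy hz : ℝ) (hε : 0 < ε) (hμ : 0 < μ) (hτ : 0 < τ)
    (hhx : 0 < hx) (hhy : 0 < hy) (hhz : 0 < hz) (lam : ℝ)
    (E1n E2n E3n H1n H2n H3n E1a E2a E3a H1a H2a H3a
      E1b E2b E3b H1b H2b H3b E1f E2f E3f H1f H2f H3f :
        Fin I × Fin J × Fin K → ℝ)
    (θ : Fin I × Fin J × Fin K → ℝ)
    -- Stage 1: from (Eⁿ, Hⁿ) to (E^{[1]}, H^{[1]})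
    (hs1x : ∀ (j : Fin J) (k : Fin K), stageRel I ε μ (τ / hx)
      (fun i => E3n (i, j, k)) (fun i => E3a (i, j, k))
      (fun i => H2n (i, j, k)) (fun i => H2a (i, j, k)))
    (hs1y : ∀ (i : Fin I) (k : Fin K), stageRel J ε μ (τ / hy)
      (fun j => E1n (i, j, k)) (fun j => E1a (i, j, k))
      (fun j => H3n (i, j, k)) (fun j => H3a (i, j, k)))
    (hs1z : ∀ (i : Fin I) (j : Fin J), stageRel K ε μ (τ / hz)
      (fun k => E2n (i, j, k)) (fun k => E2a (i, j, k))
      (fun k => H1n (i, j, k)) (fun k => H1a (i, j, k)))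
    -- Stage 2: from (E^{[1]}, H^{[1]}) to (E^{[2]}, H^{[2]})
    (hs2x : ∀ (j : Fin J) (k : Fin K), stageRel I ε μ (-(τ / hx))
      (fun i => E2a (i, j, k)) (fun i => E2b (i, j, k))
      (fun i => H3a (i, j, k)) (fun i => H3b (i, j, k)))
    (hs2y : ∀ (i : Fin I) (k : Fin K), stageRel J ε μ (-(τ / hy))
      (fun j => E3a (i, j, k)) (fun j => E3b (i, j, k))
      (fun j => H1a (i, j, k)) (fun j => H1b (i, j, k)))
    (hs2z : ∀ (i : Fin I) (j : Fin J), stageRel K ε μ (-(τ / hz))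
      (fun k => E1a (i, j, k)) (fun k => E1b (i, j, k))
      (fun k => H2a (i, j, k)) (fun k => H2b (i, j, k)))
    -- Stage 3: pointwise rotation by the noise increment
    (hs3E1 : ∀ p, E1f p = Real.cos (lam * θ p / Real.sqrt (ε * μ)) * E1b p -
      Real.sqrt (μ / ε) * Real.sin (lam * θ p / Real.sqrt (ε * μ)) * H1b p)
    (hs3E2 : ∀ p, E2f p = Real.cos (lam * θ p / Real.sqrt (ε * μ)) * E2b p -
      Real.sqrt (μ / ε) * Real.sin (lam * θ p / Real.sqrt (ε * μ)) * H2b p)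
    (hs3E3 : ∀ p, E3f p = Real.cos (lam * θ p / Real.sqrt (ε * μ)) * E3b p -
      Real.sqrt (μ / ε) * Real.sin (lam * θ p / Real.sqrt (ε * μ)) * H3b p)
    (hs3H1 : ∀ p, H1f p = Real.sqrt (ε / μ) *
      Real.sin (lam * θ p / Real.sqrt (ε * μ)) * E1b p +
      Real.cos (lam * θ p / Real.sqrt (ε * μ)) * H1b p)
    (hs3H2 : ∀ p, H2f p = Real.sqrt (ε / μ) *
      Real.sin (lam * θ p / Real.sqrt (ε * μ)) * E2b p +
      Real.cos (lam * θ p / Real.sqrt (ε * μ)) * H2b p)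
    (hs3H3 : ∀ p, H3f p = Real.sqrt (ε / μ) *
      Real.sin (lam * θ p / Real.sqrt (ε * μ)) * E3b p +
      Real.cos (lam * θ p / Real.sqrt (ε * μ)) * H3b p) :
    discreteEnergy ε μ E1f E2f E3f H1f H2f H3f =
      discreteEnergy ε μ E1n E2n E3n H1n H2n H3n := by
  -- Stage 1 energy identities
  have R1x : ε * ∑ p, E3a p ^ 2 + μ * ∑ p, H2a p ^ 2
      = ε * ∑ p, E3n p ^ 2 + μ * ∑ p, H2n p ^ 2 := by
    rw [SplitAux.sumx (fun p => E3a p ^ 2), SplitAux.sumx (fun p => H2a p ^ 2),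
      SplitAux.sumx (fun p => E3n p ^ 2), SplitAux.sumx (fun p => H2n p ^ 2)]
    simp only [Finset.mul_sum]
    rw [← Finset.sum_add_distrib, ← Finset.sum_add_distrib]
    refine Finset.sum_congr rfl fun j _ => ?_
    rw [← Finset.sum_add_distrib, ← Finset.sum_add_distrib]
    refine Finset.sum_congr rfl fun k _ => ?_
    simpa [Finset.mul_sum] using SplitAux.stage_energy hI ε μ (τ / hx) _ _ _ _ (hs1x j k)
  have R1y : ε * ∑ p, E1a p ^ 2 + μ * ∑ p, H3a p ^ 2
      = ε * ∑ p, E1n p ^ 2 + μ * ∑ p, H3n p ^ 2 := by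
    rw [SplitAux.sumy (fun p => E1a p ^ 2), SplitAux.sumy (fun p => H3a p ^ 2),
      SplitAux.sumy (fun p => E1n p ^ 2), SplitAux.sumy (fun p => H3n p ^ 2)]
    simp only [Finset.mul_sum]
    rw [← Finset.sum_add_distrib, ← Finset.sum_add_distrib]
    refine Finset.sum_congr rfl fun i _ => ?_
    rw [← Finset.sum_add_distrib, ← Finset.sum_add_distrib]
    refine Finset.sum_congr rfl fun k _ => ?_
    simpa [Finset.mul_sum] using SplitAux.stage_energy hJ ε μ (τ / hy) _ _ _ _ (hs1y i k)
  have R1z : ε * ∑ p, E2a p ^ 2 + μ * ∑ p, H1a p ^ 2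
      = ε * ∑ p, E2n p ^ 2 + μ * ∑ p, H1n p ^ 2 := by
    rw [SplitAux.sum3 (fun p => E2a p ^ 2), SplitAux.sum3 (fun p => H1a p ^ 2),
      SplitAux.sum3 (fun p => E2n p ^ 2), SplitAux.sum3 (fun p => H1n p ^ 2)]
    simp only [Finset.mul_sum]
    rw [← Finset.sum_add_distrib, ← Finset.sum_add_distrib]
    refine Finset.sum_congr rfl fun i _ => ?_
    rw [← Finset.sum_add_distrib, ← Finset.sum_add_distrib]
    refine Finset.sum_congr rfl fun j _ => ?_
    simpa [Finset.mul_sum] using SplitAux.stage_energy hK ε μ (τ / hz) _ _ _ _ (hs1z i j)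
  -- Stage 2 energy identities
  have R2x : ε * ∑ p, E2b p ^ 2 + μ * ∑ p, H3b p ^ 2
      = ε * ∑ p, E2a p ^ 2 + μ * ∑ p, H3a p ^ 2 := by
    rw [SplitAux.sumx (fun p => E2b p ^ 2), SplitAux.sumx (fun p => H3b p ^ 2),
      SplitAux.sumx (fun p => E2a p ^ 2), SplitAux.sumx (fun p => H3a p ^ 2)]
    simp only [Finset.mul_sum]
    rw [← Finset.sum_add_distrib, ← Finset.sum_add_distrib]
    refine Finset.sum_congr rfl fun j _ => ?_
    rw [← Finset.sum_add_distrib, ← Finset.sum_add_distrib]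
    refine Finset.sum_congr rfl fun k _ => ?_
    simpa [Finset.mul_sum] using
      SplitAux.stage_energy hI ε μ (-(τ / hx)) _ _ _ _ (hs2x j k)
  have R2y : ε * ∑ p, E3b p ^ 2 + μ * ∑ p, H1b p ^ 2
      = ε * ∑ p, E3a p ^ 2 + μ * ∑ p, H1a p ^ 2 := by
    rw [SplitAux.sumy (fun p => E3b p ^ 2), SplitAux.sumy (fun p => H1b p ^ 2),
      SplitAux.sumy (fun p => E3a p ^ 2), SplitAux.sumy (fun p => H1a p ^ 2)]
    simp only [Finset.mul_sum]
    rw [← Finset.sum_add_distrib, ← Finset.sum_add_distrib]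
    refine Finset.sum_congr rfl fun i _ => ?_
    rw [← Finset.sum_add_distrib, ← Finset.sum_add_distrib]
    refine Finset.sum_congr rfl fun k _ => ?_
    simpa [Finset.mul_sum] using
      SplitAux.stage_energy hJ ε μ (-(τ / hy)) _ _ _ _ (hs2y i k)
  have R2z : ε * ∑ p, E1b p ^ 2 + μ * ∑ p, H2b p ^ 2
      = ε * ∑ p, E1a p ^ 2 + μ * ∑ p, H2a p ^ 2 := by
    rw [SplitAux.sum3 (fun p => E1b p ^ 2), SplitAux.sum3 (fun p => H2b p ^ 2),
      SplitAux.sum3 (fun p => E1a p ^ 2), SplitAux.sum3 (fun p => H2a p ^ 2)]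
    simp only [Finset.mul_sum]
    rw [← Finset.sum_add_distrib, ← Finset.sum_add_distrib]
    refine Finset.sum_congr rfl fun i _ => ?_
    rw [← Finset.sum_add_distrib, ← Finset.sum_add_distrib]
    refine Finset.sum_congr rfl fun j _ => ?_
    simpa [Finset.mul_sum] using
      SplitAux.stage_energy hK ε μ (-(τ / hz)) _ _ _ _ (hs2z i j)
  -- Stage 3 energy identities
  have R31 : ε * ∑ p, E1f p ^ 2 + μ * ∑ p, H1f p ^ 2
      = ε * ∑ p, E1b p ^ 2 + μ * ∑ p, H1b p ^ 2 := by
    simp only [Finset.mul_sum, ← Finset.sum_add_distrib]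
    refine Finset.sum_congr rfl fun p _ => ?_
    rw [hs3E1 p, hs3H1 p]
    exact SplitAux.rot_energy hε hμ _ _ _
  have R32 : ε * ∑ p, E2f p ^ 2 + μ * ∑ p, H2f p ^ 2
      = ε * ∑ p, E2b p ^ 2 + μ * ∑ p, H2b p ^ 2 := by
    simp only [Finset.mul_sum, ← Finset.sum_add_distrib]
    refine Finset.sum_congr rfl fun p _ => ?_
    rw [hs3E2 p, hs3H2 p]
    exact SplitAux.rot_energy hε hμ _ _ _
  have R33 : ε * ∑ p, E3f p ^ 2 + μ * ∑ p, H3f p ^ 2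
      = ε * ∑ p, E3b p ^ 2 + μ * ∑ p, H3b p ^ 2 := by
    simp only [Finset.mul_sum, ← Finset.sum_add_distrib]
    refine Finset.sum_congr rfl fun p _ => ?_
    rw [hs3E3 p, hs3H3 p]
    exact SplitAux.rot_energy hε hμ _ _ _
  simp only [discreteEnergy, mul_add]
  linarith [R1x, R1y, R1z, R2x, R2y, R2z, R31, R32, R33]
end
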